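/- Let T : D ⊆ L²(X,ℂ) → L²(X,ℂ) be a closed densely defined operator, self-adjoint with respect to the L² inner product, such that T commutes with its conjugate operator T̄ (defined by T̄u := conj(T(conj u))). Then the kernel of the composition T T̄ intersected with the real-valued functions equals { Re u : u ∈ Ker T }. -/

import Mathlib

/-- Let `T` be a densely defined self-adjoint operator on `L²(X,ℂ)` (here formalized on the
whole Hilbert space `H = L²(X,ℂ)`, equipped with the complex conjugation `c : u ↦ conj u`,
given abstractly as an antilinear involution compatible with the inner product) such that `T`
commutes with its conjugate operator `T̄ := c ∘ T ∘ c`.  Then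
`Ker (T T̄) ∩ {real-valued functions} = { Re u : u ∈ Ker T }`,
where the real-valued elements are the fixed points of `c` and `Re u = (u + c u)/2`. -/
theorem stmt5 {H : Type*} [NormedAddCommGroup H] [InnerProductSpace ℂ H] [CompleteSpace H]
    (c : H → H)
    (hc_add : ∀ u v, c (u + v) = c u + c v)
    (hc_smul : ∀ (a : ℂ) (u : H), c (a • u) = (starRingEnd ℂ a) • c u)
    (hc_invol : ∀ u, c (c u) = u)
    (hc_inner : ∀ u v, (inner ℂ (c u) (c v) : ℂ) = starRingEnd ℂ (inner ℂ u v : ℂ))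
    (T : H →ₗ[ℂ] H)
    (hT_selfadj : ∀ u v, (inner ℂ (T u) v : ℂ) = (inner ℂ u (T v) : ℂ))
    (hT_comm : ∀ u, T (c (T (c u))) = c (T (c (T u)))) :
    {u : H | T (c (T (c u))) = 0 ∧ c u = u} =
      {w : H | ∃ u, T u = 0 ∧ w = ((2 : ℂ)⁻¹) • (u + c u)} := by
  classical
  -- basic facts about c
  have hc0 : c 0 = 0 := by
    have h := hc_add 0 0
    rw [add_zero] at h
    exact left_eq_add.mp h
  have hc_inj : ∀ a : H, c a = 0 → a = 0 := by
    intro a ha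
    rw [← hc_invol a, ha, hc0]
  have hc_sub : ∀ u v : H, c (u - v) = c u - c v := by
    intro u v
    have h : c (u - v) + c v = c u := by rw [← hc_add, sub_add_cancel]
    exact eq_sub_of_add_eq h
  -- the conjugate operator
  set N : H → H := fun x => c (T (c x)) with hNdef
  have hN_app : ∀ x : H, N x = c (T (c x)) := fun _ => rfl
  -- N is symmetric
  have hN_sym : ∀ x y : H, (inner ℂ (N x) y : ℂ) = inner ℂ x (N y) := by
    intro x y
    have h1 : (inner ℂ (N x) y : ℂ) = inner ℂ (c (T (c x))) (c (c y)) := by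
      rw [hc_invol]
    have h2 : (inner ℂ (c x) (T (c y)) : ℂ)
        = starRingEnd ℂ (inner ℂ x (c (T (c y)))) := by
      have := hc_inner x (c (T (c y)))
      rwa [hc_invol] at this
    rw [h1, hc_inner, hT_selfadj, h2, Complex.conj_conj, hN_app]
  -- T on the kernel elements conjugated etc.
  have hNK : ∀ k : H, T k = 0 → T (N k) = 0 := by
    intro k hk
    rw [hN_app, hT_comm k, hk, hc0, map_zero, hc0]
  -- T is continuous (Hellinger–Toeplitz), so its kernel is closed
  have hTsym : T.IsSymmetric := hT_selfadj
  have hTc : Continuous T := hTsym.continuous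
  set K : Submodule ℂ H := LinearMap.ker T with hKdef
  have hK_mem : ∀ x : H, x ∈ K ↔ T x = 0 := fun x => LinearMap.mem_ker
  have hKc : IsClosed (K : Set H) := by
    have : (K : Set H) = T ⁻¹' {0} := by
      ext x; simp [hKdef, LinearMap.mem_ker]
    rw [this]
    exact isClosed_singleton.preimage hTc
  haveI : CompleteSpace K := hKc.completeSpace_coe
  -- orthogonal projection onto ker T
  set P : H → H := fun x => ((K.orthogonalProjection x : K) : H) with hPdef
  have hP_mem : ∀ x : H, T (P x) = 0 := fun x => (hK_mem _).mp (K.orthogonalProjection x).2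
  have hP_add : ∀ x y : H, P (x + y) = P x + P y := by
    intro x y; simp only [hPdef, map_add, Submodule.coe_add]
  have hP_sub : ∀ x y : H, P (x - y) = P x - P y := by
    intro x y; simp only [hPdef, map_sub, Submodule.coe_sub]
  have hP0 : P 0 = 0 := by simp only [hPdef, map_zero, Submodule.coe_zero]
  have hP_id : ∀ k : H, T k = 0 → P k = k := by
    intro k hk
    exact Submodule.starProjection_eq_self_iff.mpr ((hK_mem _).mpr hk)
  have hP_orth' : ∀ x k : H, T k = 0 → (inner ℂ k (x - P x) : ℂ) = 0 := by
    intro x k hk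
    have h := Submodule.sub_starProjection_mem_orthogonal (K := K) x
    exact (Submodule.mem_orthogonal K _).mp h k ((hK_mem _).mpr hk)
  have hP_orth : ∀ x k : H, T k = 0 → (inner ℂ (x - P x) k : ℂ) = 0 := by
    intro x k hk
    rw [← inner_conj_symm, hP_orth' x k hk, map_zero]
  have hP_zero : ∀ y : H, (∀ k : H, T k = 0 → (inner ℂ y k : ℂ) = 0) → P y = 0 := by
    intro y hy
    have h1 : (inner ℂ (y - P y) (P y) : ℂ) = 0 := hP_orth y (P y) (hP_mem y)
    have h2 : (inner ℂ y (P y) : ℂ) = 0 := hy (P y) (hP_mem y)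
    have h3 : (inner ℂ (P y) (P y) : ℂ) = 0 := by
      rw [inner_sub_left, h2] at h1
      linear_combination -h1
    exact inner_self_eq_zero.mp h3
  have hP_selfadj : ∀ x y : H, (inner ℂ (P x) y : ℂ) = inner ℂ x (P y) :=
    fun x y => Submodule.inner_starProjection_left_eq_right K x y
  -- the conjugated projection Q (projection onto ker N)
  set Q : H → H := fun x => c (P (c x)) with hQdef
  have hQ_app : ∀ x : H, Q x = c (P (c x)) := fun _ => rfl
  have hKerN_c : ∀ k : H, N k = 0 → T (c k) = 0 := by
    intro k h
    exact hc_inj _ h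
  have hcKerN : ∀ k : H, T k = 0 → N (c k) = 0 := by
    intro k hk
    rw [hN_app, hc_invol, hk, hc0]
  have hQ_memN : ∀ x : H, N (Q x) = 0 := by
    intro x
    rw [hQ_app, hN_app, hc_invol, hP_mem, hc0]
  have hQ_id : ∀ k : H, N k = 0 → Q k = k := by
    intro k hk
    rw [hQ_app, hP_id _ (hKerN_c k hk), hc_invol]
  have hQ_add : ∀ x y : H, Q (x + y) = Q x + Q y := by
    intro x y; rw [hQ_app, hQ_app, hQ_app, hc_add, hP_add, hc_add]
  have hQ_sub : ∀ x y : H, Q (x - y) = Q x - Q y := by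
    intro x y; rw [hQ_app, hQ_app, hQ_app, hc_sub, hP_sub, hc_sub]
  have hQ_zero : ∀ y : H, (∀ k : H, N k = 0 → (inner ℂ y k : ℂ) = 0) → Q y = 0 := by
    intro y hy
    have h : P (c y) = 0 := by
      apply hP_zero
      intro k hk
      have h1 : (inner ℂ (c y) (c (c k)) : ℂ) = starRingEnd ℂ (inner ℂ y (c k)) :=
        hc_inner y (c k)
      rw [hc_invol] at h1
      rw [h1, hy (c k) (hcKerN k hk), map_zero]
    rw [hQ_app, h, hc0]
  have hcP : ∀ x : H, c (P x) = Q (c x) := by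
    intro x; rw [hQ_app, hc_invol]
  have hcQ : ∀ x : H, c (Q x) = P (c x) := by
    intro x; rw [hQ_app, hc_invol]
  -- P commutes with N
  have hPN : ∀ x : H, P (N x) = N (P x) := by
    intro x
    have hx : N x = N (P x) + N (x - P x) := by
      have : P x + (x - P x) = x := by abel
      calc N x = N (P x + (x - P x)) := by rw [this]
        _ = N (P x) + N (x - P x) := by
            rw [hN_app, hN_app, hN_app, hc_add, map_add, hc_add]
    have h1 : P (N (P x)) = N (P x) := hP_id _ (hNK _ (hP_mem x))
    have h2 : P (N (x - P x)) = 0 := by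
      apply hP_zero
      intro k hk
      rw [hN_sym]
      exact hP_orth x (N k) (hNK k hk)
    rw [hx, hP_add, h1, h2, add_zero]
  -- T commutes with Q
  have hTQ : ∀ x : H, T (Q x) = Q (T x) := by
    intro x
    have h : c (T (Q x)) = c (Q (T x)) := by
      have l1 : c (T (Q x)) = N (P (c x)) := by rw [hN_app, hQ_app]
      have l2 : N (c x) = c (T x) := by rw [hN_app, hc_invol]
      rw [l1, ← hPN, l2, hQ_app, hc_invol]
    have := congrArg c h
    rwa [hc_invol, hc_invol] at this
  -- P and Q commute
  have hQP : ∀ x : H, Q (P x) = P (Q x) := by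
    intro x
    have hx : P x = P (Q x) + P (x - Q x) := by
      have : Q x + (x - Q x) = x := by abel
      calc P x = P (Q x + (x - Q x)) := by rw [this]
        _ = P (Q x) + P (x - Q x) := hP_add _ _
    have h1 : Q (P (Q x)) = P (Q x) := by
      apply hQ_id
      rw [← hPN, hQ_memN]
      exact hP0
    have h2 : Q (P (x - Q x)) = 0 := by
      apply hQ_zero
      intro k hk
      have hPk : N (P k) = 0 := by rw [← hPN, hk]; exact hP0
      rw [hP_selfadj]
      have h3 : (inner ℂ (c (x - Q x)) (c (P k)) : ℂ)
          = starRingEnd ℂ (inner ℂ (x - Q x) (P k)) := hc_inner _ _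
      have h4 : c (x - Q x) = c x - P (c x) := by rw [hc_sub, hcQ]
      have h5 : (inner ℂ (c x - P (c x)) (c (P k)) : ℂ) = 0 :=
        hP_orth (c x) (c (P k)) (hKerN_c _ hPk)
      rw [h4, h5] at h3
      have := congrArg (starRingEnd ℂ) h3.symm
      rwa [Complex.conj_conj, map_zero] at this
    rw [hx, hQ_add, h1, h2, add_zero]
  -- now the set equality
  ext w
  simp only [Set.mem_setOf_eq]
  constructor
  · rintro ⟨h1, h2⟩
    have hNwK : T (N w) = 0 := h1
    have hNTw : N (T w) = 0 := (hT_comm w).symm.trans h1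
    -- the key decomposition
    have hQw : Q w = c (P w) := by rw [hcP, h2]
    set r : H := w - P w - Q w with hrdef
    have hTr : T r = 0 := by
      have : T r = T w - T (P w) - T (Q w) := by rw [hrdef, map_sub, map_sub]
      rw [this, hP_mem, hTQ, hQ_id _ hNTw]
      abel
    have hPr : P r = r := hP_id r hTr
    have hPr2 : P r = -P (Q w) := by
      rw [hrdef, hP_sub, hP_sub, hP_id _ (hP_mem w)]
      abel
    have key : P w + Q w - P (Q w) = w := by
      have h := hPr.symm.trans hPr2
      rw [hrdef, sub_sub] at h
      have h' := sub_eq_iff_eq_add.mp h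
      conv_rhs => rw [h']
      abel
    refine ⟨P w + P w - P (Q w), ?_, ?_⟩
    · simp only [map_sub, map_add, hP_mem]; simp
    · have hcv : c (P w + P w - P (Q w)) = Q w + Q w - P (Q w) := by
        rw [hc_sub, hc_add, hcP, h2, hcP, hcQ, h2, hQP]
      rw [hcv]
      have hsum : (P w + P w - P (Q w)) + (Q w + Q w - P (Q w)) = w + w := by
        conv_rhs => rw [← key]
        abel
      rw [hsum, ← two_smul ℂ w, smul_smul]
      norm_num
  · rintro ⟨v, hv, rfl⟩
    have hconj2 : (starRingEnd ℂ) ((2 : ℂ)⁻¹) = (2 : ℂ)⁻¹ := by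
      rw [map_inv₀, Complex.conj_ofNat]
    have hreal : c ((2 : ℂ)⁻¹ • (v + c v)) = (2 : ℂ)⁻¹ • (v + c v) := by
      rw [hc_smul, hc_add, hc_invol, hconj2, add_comm]
    refine ⟨?_, hreal⟩
    have hTw : T ((2 : ℂ)⁻¹ • (v + c v)) = (2 : ℂ)⁻¹ • T (c v) := by
      rw [map_smul, map_add, hv, zero_add]
    have hZ : T (c (T (c v))) = 0 := by
      rw [hT_comm, hv, hc0, map_zero, hc0]
    simp only [hreal, hTw, hc_smul, hconj2, map_smul, hZ, smul_zero]
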